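/- Let (u,v) and (w,x) be two informative edges of a MUL-tree T lying on a path P_{u,x} = (u, v, …, w, x), and suppose Δ(u,v) ⊆ Δ(w,x). Then every internal edge lying in a subtree that branches out from P_{u,x} is contractible; indeed every such edge (a,b), with a its endpoint closer to the path, satisfies M_b^{ab} = ∅ and hence resolves no quartet. -/

import Mathlib

open SimpleGraph

variable {V V' L L' : Type}

/-- Degree of a vertex, via `Set.ncard` of the neighbor set (no instances needed). -/
noncomputable def deg (G : SimpleGraph V) (v : V) : ℕ := (G.neighborSet v).ncard

/-- A leaf is a vertex of degree one. -/
def IsLeaf (G : SimpleGraph V) (v : V) : Prop := deg G v = 1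

/-- The vertex set of the subtree `T_u^{uv}`: vertices reachable from `u`
after deleting the edge `(u,v)`. -/
def side (G : SimpleGraph V) (u v : V) : Set V :=
  {w | (G.deleteEdges {s(u, v)}).Reachable w u}

/-- Labels appearing on leaves of the `u`-side of the edge `(u,v)`. -/
def sideLabels (G : SimpleGraph V) (ψ : V → L) (u v : V) : Set L :=
  {m | ∃ w, IsLeaf G w ∧ w ∈ side G u v ∧ ψ w = m}

/-- `M_u^{uv}`: labels appearing on leaves of `T_u^{uv}` but not of `T_v^{uv}`. -/
def Mside (G : SimpleGraph V) (ψ : V → L) (u v : V) : Set L :=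
  sideLabels G ψ u v \ sideLabels G ψ v u

/-- `C^{uv}`: labels appearing on leaves of both sides of the edge `(u,v)`. -/
def Cside (G : SimpleGraph V) (ψ : V → L) (u v : V) : Set L :=
  sideLabels G ψ u v ∩ sideLabels G ψ v u

/-- A quartet `ab|cd`: an unordered pair of unordered pairs of labels. -/
abbrev Quartet (L : Type) := Sym2 (Sym2 L)

/-- The edge `(u,v)` resolves the quartet `q = ab|cd` when `{a,b} ⊆ M_u^{uv}` and
`{c,d} ⊆ M_v^{uv}` (with `a,b,c,d` four distinct labels). -/
def Resolves (G : SimpleGraph V) (ψ : V → L) (u v : V) (q : Quartet L) : Prop :=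
  G.Adj u v ∧ ∃ a b c d : L, a ≠ b ∧ c ≠ d ∧
    a ∈ Mside G ψ u v ∧ b ∈ Mside G ψ u v ∧
    c ∈ Mside G ψ v u ∧ d ∈ Mside G ψ v u ∧
    q = s(s(a, b), s(c, d))

/-- `Δ(u,v)`: the set of quartets resolved by the edge `(u,v)`. -/
def Δ (G : SimpleGraph V) (ψ : V → L) (u v : V) : Set (Quartet L) :=
  {q | Resolves G ψ u v q}

/-- The information content `I(T)`: all quartets resolved by some edge. -/
def infoContent (G : SimpleGraph V) (ψ : V → L) : Set (Quartet L) :=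
  {q | ∃ u v, Resolves G ψ u v q}

/-- The label set `M`: labels carried by the leaves. -/
def labelSet (G : SimpleGraph V) (ψ : V → L) : Set L :=
  {m | ∃ v, IsLeaf G v ∧ ψ v = m}

/-- Singly labeled: the labeling map is injective on leaves. -/
def SinglyLabeled (G : SimpleGraph V) (ψ : V → L) : Prop :=
  ∀ v w, IsLeaf G v → IsLeaf G w → ψ v = ψ w → v = w

/-- A MUL-tree: a finite unrooted tree (encoded as the nontrivial connected component
of `G`; vertices outside `G.support` are unused isolated vertices) together with a
labeling `ψ` of its leaves, such that every internal (non-leaf) node has degree ≥ 3.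
The label set `M` is `labelSet G ψ`, onto which `ψ` (restricted to leaves) is
automatically surjective. -/
structure MulTree (V L : Type) : Type where
  G : SimpleGraph V
  ψ : V → L
  fin : Finite V
  acyclic : G.IsAcyclic
  conn : ∀ u ∈ G.support, ∀ v ∈ G.support, G.Reachable u v
  internal3 : ∀ v ∈ G.support, ¬ IsLeaf G v → 3 ≤ deg G v

/-- `y` lies on the (unique) path between `a` and `b`: `a,b` are connected and
every walk from `a` to `b` passes through `y`. -/
def OnPath (G : SimpleGraph V) (y a b : V) : Prop :=
  G.Reachable a b ∧ ∀ p : G.Walk a b, y ∈ p.support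

/-- The edges `(u,v)` and `(w,x)` lie, in this order, on the path
`P_{u,x} = (u, v, …, w, x)` (possibly `v = w`). -/
def PathConfig (G : SimpleGraph V) (u v w x : V) : Prop :=
  G.Adj u v ∧ G.Adj w x ∧ OnPath G v u x ∧ OnPath G w v x

/-- An internal edge: both endpoints are internal (non-leaf) nodes. -/
def InternalEdge (G : SimpleGraph V) (a b : V) : Prop :=
  G.Adj a b ∧ ¬ IsLeaf G a ∧ ¬ IsLeaf G b

/-- Contracting the edge `(a,b)`: identify `b` with `a` (the vertex `b` becomes
an unused isolated vertex). -/
def contractEdge (G : SimpleGraph V) (a b : V) : SimpleGraph V where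
  Adj x y := x ≠ y ∧ x ≠ b ∧ y ≠ b ∧
    (G.Adj x y ∨ (x = a ∧ G.Adj b y) ∨ (y = a ∧ G.Adj x b))
  symm := by
    constructor
    rintro x y ⟨h1, h2, h3, h4 | ⟨hx, hy⟩ | ⟨hy, hx⟩⟩
    · exact ⟨h1.symm, h3, h2, Or.inl h4.symm⟩
    · exact ⟨h1.symm, h3, h2, Or.inr (Or.inr ⟨hx, hy.symm⟩)⟩
    · exact ⟨h1.symm, h3, h2, Or.inr (Or.inl ⟨hy, hx.symm⟩)⟩
  loopless := ⟨fun x h => h.1 rfl⟩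

/-- `PruneSpec G v₀ G'` : `G'` is the result of pruning the leaf `v₀` from `G`:
delete `v₀` (i.e. its unique edge); if as a result the neighbor `u` of `v₀`
becomes a degree-two node, additionally delete `u` and connect its former two
other neighbors by an edge. Deleted vertices become unused isolated vertices. -/
def PruneSpec (G : SimpleGraph V) (v₀ : V) (G' : SimpleGraph V) : Prop :=
  ∃ u, G.neighborSet v₀ = {u} ∧
    ((deg G u ≠ 3 ∧ G' = G.deleteEdges {s(u, v₀)}) ∨
     (deg G u = 3 ∧ ∃ p q, p ≠ q ∧ p ≠ v₀ ∧ q ≠ v₀ ∧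
        G.neighborSet u = {v₀, p, q} ∧
        G' = G.deleteEdges {s(u, v₀), s(u, p), s(u, q)} ⊔ fromEdgeSet {s(p, q)}))

/-- A leaf is prunable if pruning it leaves the information content unchanged. -/
def Prunable (G : SimpleGraph V) (ψ : V → L) (v₀ : V) : Prop :=
  IsLeaf G v₀ ∧ ∃ G', PruneSpec G v₀ G' ∧ infoContent G' ψ = infoContent G ψ

/-- An internal edge is contractible if contracting it leaves the information
content unchanged. -/
def Contractible (G : SimpleGraph V) (ψ : V → L) (a b : V) : Prop :=
  InternalEdge G a b ∧ infoContent (contractEdge G a b) ψ = infoContent G ψ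

/-- Maximally reduced: no prunable leaf and no contractible internal edge. -/
def MaximallyReduced (G : SimpleGraph V) (ψ : V → L) : Prop :=
  (∀ v, ¬ Prunable G ψ v) ∧ (∀ a b, ¬ Contractible G ψ a b)

/-- One reduction step: prune a prunable leaf or contract a contractible
internal edge. -/
def ReduceStep (ψ : V → L) (G G' : SimpleGraph V) : Prop :=
  (∃ v₀, Prunable G ψ v₀ ∧ PruneSpec G v₀ G') ∨
  (∃ a b, Contractible G ψ a b ∧ G' = contractEdge G a b)

/-- `H` is a maximally reduced form (MRF) of `G`: obtained from `G` by repeatedly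
pruning prunable leaves and contracting contractible internal edges, until
neither operation is possible. -/
def IsMRF (ψ : V → L) (G H : SimpleGraph V) : Prop :=
  Relation.ReflTransGen (ReduceStep ψ) G H ∧ MaximallyReduced H ψ

/-- Label-preserving isomorphism of (leaf-labeled) trees: a graph isomorphism
between the supports mapping leaves to leaves and preserving leaf labels. -/
def LIso (G : SimpleGraph V) (ψ : V → L) (G' : SimpleGraph V') (ψ' : V' → L) : Prop :=
  ∃ f : G.support ≃ G'.support,
    (∀ x y : G.support, G'.Adj (f x).1 (f y).1 ↔ G.Adj x.1 y.1) ∧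
    (∀ x : G.support, IsLeaf G x.1 → IsLeaf G' (f x).1 ∧ ψ' (f x).1 = ψ x.1)

/-- The set of internal edges of `G`, as unordered pairs. -/
def internalEdgeSet (G : SimpleGraph V) : Set (Sym2 V) :=
  {e | ∃ a b, e = s(a, b) ∧ InternalEdge G a b}

/-- The subtree `T_z^{yz}` branches out from the path `P_{u,x}` :
`y` is an interior vertex of the path and `z` is off the path. -/
def BranchesOut (G : SimpleGraph V) (u x y z : V) : Prop :=
  G.Adj y z ∧ OnPath G y u x ∧ y ≠ u ∧ y ≠ x ∧ ¬ OnPath G z u x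

/-- Vertices of the minimal subtree spanning all leaves labeled `ℓ`. -/
def spanVerts (G : SimpleGraph V) (ψ : V → L) (ℓ : L) : Set V :=
  {p | ∃ c d, IsLeaf G c ∧ IsLeaf G d ∧ ψ c = ℓ ∧ ψ d = ℓ ∧ OnPath G p c d}

/-- Degree of `y` within the subtree induced on the vertex set `S`. -/
noncomputable def degIn (G : SimpleGraph V) (S : Set V) (y : V) : ℕ :=
  (G.neighborSet y ∩ S).ncard

/-- One step of deleting a leaf labeled `ℓ` (by pruning, with suppression). -/
def PruneLabelStep (ψ : V → L) (ℓ : L) (G G' : SimpleGraph V) : Prop :=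
  ∃ v₀, IsLeaf G v₀ ∧ ψ v₀ = ℓ ∧ PruneSpec G v₀ G'

section Aux
variable {V L : Type}

lemma reach_del_iff (G : SimpleGraph V) (S : Set (Sym2 V)) (s t : V) :
    (G.deleteEdges S).Reachable s t ↔ ∃ W : G.Walk s t, ∀ e ∈ W.edges, e ∉ S := by
  constructor
  · rintro ⟨W⟩
    refine ⟨W.transfer G ?_, ?_⟩
    · intro e he
      have := W.edges_subset_edgeSet he
      rw [edgeSet_deleteEdges] at this
      exact this.1
    · rw [Walk.edges_transfer]
      intro e he
      have := W.edges_subset_edgeSet he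
      rw [edgeSet_deleteEdges] at this
      exact this.2
  · rintro ⟨W, hW⟩
    refine ⟨W.transfer _ ?_⟩
    intro e he
    rw [edgeSet_deleteEdges]
    exact ⟨W.edges_subset_edgeSet he, hW e he⟩

lemma mem_side_iff {G : SimpleGraph V} {u v s : V} :
    s ∈ side G u v ↔ ∃ W : G.Walk s u, ∀ e ∈ W.edges, e ≠ s(u, v) := by
  rw [show (s ∈ side G u v) = (G.deleteEdges {s(u,v)}).Reachable s u from rfl, reach_del_iff]
  simp

lemma reach_start_of_mem_support {G : SimpleGraph V} {s t c : V} (W : G.Walk s t)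
    (hc : c ∈ W.support) : G.Reachable c s := by
  haveI := Classical.decEq V
  exact ⟨(W.takeUntil c hc).reverse⟩

lemma not_reach_del {G : SimpleGraph V} (hG : G.IsAcyclic) {p q : V} (h : G.Adj p q) :
    p ∉ side G q p := by
  haveI := Classical.decEq V
  rw [mem_side_iff]
  rintro ⟨W, hW⟩
  have h1 : W.toPath = (⟨Walk.cons h Walk.nil, by simp [h.ne]⟩ : G.Path p q) :=
    hG.path_unique _ _
  have h2 : s(q, p) ∈ (W.toPath : G.Walk p q).edges → False := by
    intro hmem
    exact hW _ (W.edges_toPath_subset hmem) rfl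
  apply h2
  rw [congrArg Subtype.val h1]
  simp [Sym2.eq_swap]

lemma side_disjoint {G : SimpleGraph V} (hG : G.IsAcyclic) {p q s : V} (h : G.Adj p q)
    (h1 : s ∈ side G p q) (h2 : s ∈ side G q p) : False := by
  rw [mem_side_iff] at h1 h2
  obtain ⟨W1, hW1⟩ := h1
  obtain ⟨W2, hW2⟩ := h2
  refine not_reach_del hG h ?_
  rw [mem_side_iff]
  refine ⟨W1.reverse.append W2, ?_⟩
  intro e he
  rw [Walk.edges_append, List.mem_append] at he
  rcases he with he | he
  · rw [Walk.edges_reverse, List.mem_reverse] at he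
    intro hc; exact hW1 e he (hc.trans Sym2.eq_swap)
  · exact hW2 e he

lemma walk_side_or {G : SimpleGraph V} :
    ∀ {s t : V} (W : G.Walk s t) (q : V), s ∈ side G t q ∨ s ∈ side G q t := by
  intro s t W
  induction W with
  | nil => exact fun q => Or.inl (Reachable.refl _)
  | @cons c c' d hadj W ih =>
    intro q
    by_cases he : s(c, c') = s(d, q)
    · rw [Sym2.eq_iff] at he
      rcases he with ⟨rfl, -⟩ | ⟨rfl, -⟩
      · exact Or.inl (Reachable.refl _)
      · exact Or.inr (Reachable.refl _)
    · rcases ih q with h | h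
      · exact Or.inl ((Adj.reachable (deleteEdges_adj.mpr ⟨hadj, by simpa using he⟩)).trans h)
      · refine Or.inr ((Adj.reachable (deleteEdges_adj.mpr ⟨hadj, ?_⟩)).trans h)
        simp only [Set.mem_singleton_iff]
        exact fun hc => he (hc.trans Sym2.eq_swap)

lemma reach_side_or {G : SimpleGraph V} {p q s : V} (hr : G.Reachable s p) :
    s ∈ side G p q ∨ s ∈ side G q p := by
  obtain ⟨W⟩ := hr
  exact walk_side_or W q

lemma sub1 {G : SimpleGraph V} {a' b' y' z' : V} (hb : b' ∈ side G z' y')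
    (hy : y' ∉ side G b' a') : side G b' a' ⊆ side G z' y' := by
  haveI := Classical.decEq V
  intro e he
  rw [mem_side_iff] at he ⊢
  obtain ⟨W, hW⟩ := he
  have hyz : ∀ e' ∈ W.edges, e' ≠ s(z', y') := by
    intro e' he' hc
    have hy' : y' ∈ W.support := by
      rw [hc] at he'
      exact W.snd_mem_support_of_mem_edges he'
    refine hy ?_
    rw [mem_side_iff]
    exact ⟨W.dropUntil y' hy', fun e2 he2 => hW e2 (W.edges_dropUntil_subset hy' he2)⟩
  rw [mem_side_iff] at hb
  obtain ⟨Wb, hWb⟩ := hb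
  exact ⟨W.append Wb, by
    intro e2 he2
    rw [Walk.edges_append, List.mem_append] at he2
    rcases he2 with h2 | h2
    · exact hyz e2 h2
    · exact hWb e2 h2⟩

lemma path_decomp {G : SimpleGraph V} (hG : G.IsAcyclic) {u v x : V} (huv : G.Adj u v)
    (hR : G.Reachable u x) (hv : ∀ p : G.Walk u x, v ∈ p.support) :
    ∃ Q : G.Walk v x, (∀ e ∈ Q.edges, e ≠ s(u, v)) ∧
      ∀ c, (∀ p : G.Walk u x, c ∈ p.support) → c ≠ u → c ∈ Q.support := by
  haveI := Classical.decEq V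
  obtain ⟨W⟩ := hR
  set P := W.toPath with hP
  have hvP : v ∈ (P : G.Walk u x).support := hv _
  have htp : ((P : G.Walk u x).takeUntil v hvP) = Walk.cons huv Walk.nil := by
    have h1 : (⟨(P : G.Walk u x).takeUntil v hvP, P.2.takeUntil hvP⟩ : G.Path u v) =
        ⟨Walk.cons huv Walk.nil, by simp [huv.ne]⟩ := hG.path_unique _ _
    exact congrArg Subtype.val h1
  have hspec := ((P : G.Walk u x).take_spec hvP).symm
  refine ⟨(P : G.Walk u x).dropUntil v hvP, ?_, ?_⟩
  · intro e he hc
    have hnd : (P : G.Walk u x).edges.Nodup := P.2.edges_nodup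
    rw [hspec, Walk.edges_append, htp] at hnd
    simp only [Walk.edges_cons, Walk.edges_nil, List.singleton_append] at hnd
    rw [List.nodup_cons] at hnd
    subst hc
    exact hnd.1 (by simpa using he)
  · intro c hc hcu
    have hm := hc (P : G.Walk u x)
    rw [hspec, Walk.support_append, htp] at hm
    simp only [Walk.support_cons, Walk.support_nil] at hm
    rcases List.mem_append.mp hm with h | h
    · simp only [List.mem_cons, List.mem_singleton, List.not_mem_nil, or_false] at h
      rcases h with h | h
      · exact absurd h hcu
      · subst h; exact Walk.start_mem_support _
    · exact List.mem_of_mem_tail h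

lemma side_of_on_walk {G : SimpleGraph V} {u v t c : V} {Q : G.Walk v t}
    (hQ : ∀ e ∈ Q.edges, e ≠ s(u, v)) (hc : c ∈ Q.support) : c ∈ side G v u := by
  haveI := Classical.decEq V
  rw [mem_side_iff]
  refine ⟨(Q.takeUntil c hc).reverse, ?_⟩
  intro e he hce
  rw [Walk.edges_reverse, List.mem_reverse] at he
  exact hQ e (Q.edges_takeUntil_subset hc he) (hce.trans Sym2.eq_swap)

lemma side_of_both_mem {G : SimpleGraph V} {s t y z c : V} {W : G.Walk s t}
    (hW : ∀ e ∈ W.edges, e ≠ s(y, z)) (hc : c ∈ W.support) (hy : y ∈ W.support) :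
    c ∈ side G y z := by
  have hT : ∀ e ∈ W.edges, e ∈ (G.deleteEdges {s(y, z)}).edgeSet := by
    intro e he
    rw [edgeSet_deleteEdges]
    exact ⟨W.edges_subset_edgeSet he, by simpa using hW e he⟩
  have hc' : c ∈ (W.transfer _ hT).support := by rwa [Walk.support_transfer]
  have hy' : y ∈ (W.transfer _ hT).support := by rwa [Walk.support_transfer]
  exact (reach_start_of_mem_support _ hc').trans (reach_start_of_mem_support _ hy').symm

lemma leaf_mem_support {G : SimpleGraph V} {f : V} (hf : IsLeaf G f) : f ∈ G.support := by
  have hd : deg G f = 1 := hf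
  unfold deg at hd
  have : (G.neighborSet f).Nonempty := by
    apply Set.nonempty_of_ncard_ne_zero
    rw [hd]; exact one_ne_zero
  obtain ⟨c, hc⟩ := this
  exact ⟨c, hc⟩

end Aux

section Contract
variable {V L : Type} {G : SimpleGraph V} {a b : V}

/-- The contraction map sending `b` to `a`. -/
noncomputable def cmap (a b s : V) : V := @ite _ (s = b) (Classical.dec _) a s

lemma cmap_b : cmap a b b = a := by unfold cmap; rw [if_pos rfl]

lemma cmap_of_ne {s : V} (h : s ≠ b) : cmap a b s = s := by unfold cmap; rw [if_neg h]

lemma cmap_ne_b (hne : a ≠ b) (s : V) : cmap a b s ≠ b := by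
  by_cases h : s = b
  · rw [h, cmap_b]; exact hne
  · rw [cmap_of_ne h]; exact h

lemma contractEdge_adj' {x y : V} : (contractEdge G a b).Adj x y ↔
    x ≠ y ∧ x ≠ b ∧ y ≠ b ∧ (G.Adj x y ∨ (x = a ∧ G.Adj b y) ∨ (y = a ∧ G.Adj x b)) :=
  Iff.rfl

lemma no_triangle (hG : G.IsAcyclic) (hab : G.Adj a b) {c : V} (h1 : G.Adj c a)
    (h2 : G.Adj c b) : False := by
  have hp1 : (⟨Walk.cons hab Walk.nil, by simp [hab.ne]⟩ : G.Path a b) =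
      ⟨Walk.cons h1.symm (Walk.cons h2 Walk.nil), by
        simp [Walk.isPath_def, hab.ne, hab.ne', h1.ne, h1.ne', h2.ne, h2.ne']⟩ :=
    hG.path_unique _ _
  have := congrArg (fun pp : G.Path a b => (pp : G.Walk a b).length) hp1
  simp [Walk.length_cons] at this

lemma exists_other_neighbor [Finite V] {c : V} (h : G.Adj a c) (hl : ¬IsLeaf G a) :
    ∃ y, G.Adj a y ∧ y ≠ c := by
  by_contra hcon
  push_neg at hcon
  apply hl
  have hset : G.neighborSet a = {c} := by
    apply Set.eq_singleton_iff_unique_mem.mpr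
    exact ⟨h, fun y hy => hcon y hy⟩
  unfold IsLeaf deg
  rw [hset, Set.ncard_singleton]

lemma neighborSet_contract_b : (contractEdge G a b).neighborSet b = ∅ := by
  ext t
  simp only [mem_neighborSet, Set.mem_empty_iff_false, iff_false]
  rintro ⟨-, hbb, -⟩
  exact hbb rfl

lemma leaf_contract [Finite V] (hG : G.IsAcyclic) (hab : G.Adj a b)
    (hla : ¬IsLeaf G a) (hlb : ¬IsLeaf G b) (s : V) :
    IsLeaf (contractEdge G a b) s ↔ IsLeaf G s := by
  have tri : ∀ c, G.Adj c a → G.Adj c b → False := fun c => no_triangle hG hab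
  by_cases hsb : s = b
  · constructor
    · intro hleaf
      exfalso
      have hd : deg (contractEdge G a b) s = 1 := hleaf
      unfold deg at hd
      rw [hsb, neighborSet_contract_b] at hd
      simp at hd
    · intro hl; exact absurd (hsb ▸ hl) hlb
  by_cases hsa : s = a
  · constructor
    · intro hleaf
      exfalso
      obtain ⟨y1, hy1, hy1b⟩ := exists_other_neighbor hab hla
      obtain ⟨y2, hy2, hy2a⟩ := exists_other_neighbor hab.symm hlb
      have hm1 : y1 ∈ (contractEdge G a b).neighborSet a :=
        ⟨hy1.ne, hab.ne, hy1b, Or.inl hy1⟩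
      have hm2 : y2 ∈ (contractEdge G a b).neighborSet a :=
        ⟨Ne.symm hy2a, hab.ne, hy2.ne', Or.inr (Or.inl ⟨rfl, hy2⟩)⟩
      have hne12 : y1 ≠ y2 := by
        intro hc
        exact tri y1 hy1.symm (by rw [hc]; exact hy2.symm)
      have h2 : 1 < ((contractEdge G a b).neighborSet a).ncard := by
        rw [Set.one_lt_ncard_iff (Set.toFinite _)]
        exact ⟨y1, y2, hm1, hm2, hne12⟩
      have hd : deg (contractEdge G a b) a = 1 := hsa ▸ hleaf
      unfold deg at hd
      omega
    · intro hl; exact absurd (hsa ▸ hl) hla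
  · by_cases hsAdjb : G.Adj s b
    · have hnsa : ¬G.Adj s a := fun hh => tri s hh hsAdjb
      have hNs : (contractEdge G a b).neighborSet s = insert a (G.neighborSet s \ {b}) := by
        ext t
        simp only [mem_neighborSet, contractEdge_adj', Set.mem_insert_iff, Set.mem_diff,
          Set.mem_singleton_iff]
        constructor
        · rintro ⟨hst, -, htb, hAdj | ⟨rfl, -⟩ | ⟨rfl, -⟩⟩
          · exact Or.inr ⟨hAdj, htb⟩
          · exact absurd rfl hsa
          · exact Or.inl rfl
        · rintro (rfl | ⟨hAdj, htb⟩)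
          · exact ⟨hsa, hsb, hab.ne, Or.inr (Or.inr ⟨rfl, hsAdjb⟩)⟩
          · exact ⟨hAdj.ne, hsb, htb, Or.inl hAdj⟩
      have h2 : (G.neighborSet s \ {b}).ncard + 1 = (G.neighborSet s).ncard :=
        Set.ncard_diff_singleton_add_one hsAdjb (Set.toFinite _)
      unfold IsLeaf deg
      rw [hNs, Set.ncard_insert_of_notMem (fun hmem => hnsa hmem.1) (Set.toFinite _), h2]
    · have hNs : (contractEdge G a b).neighborSet s = G.neighborSet s := by
        ext t
        simp only [mem_neighborSet, contractEdge_adj']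
        constructor
        · rintro ⟨hst, -, htb, hAdj | ⟨rfl, -⟩ | ⟨rfl, hsb'⟩⟩
          · exact hAdj
          · exact absurd rfl hsa
          · exact absurd hsb' hsAdjb
        · intro hAdj
          have htb : t ≠ b := fun hc => hsAdjb (hc ▸ hAdj)
          exact ⟨hAdj.ne, hsb, htb, Or.inl hAdj⟩
      unfold IsLeaf deg
      rw [hNs]

variable {p r p2 r2 : V}

/-- Case data describing the `G`-edge `(p2, r2)` corresponding to the
contracted-graph edge `(p, r)`. -/
def CaseData (G : SimpleGraph V) (a b p r p2 r2 : V) : Prop :=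
  (p2 = p ∧ r2 = r ∧ G.Adj p r) ∨ (p = a ∧ p2 = b ∧ r2 = r ∧ G.Adj b r) ∨
    (r = a ∧ r2 = b ∧ p2 = p ∧ G.Adj p b)

lemma caseData_swap (h : CaseData G a b p r p2 r2) : CaseData G a b r p r2 p2 := by
  rcases h with ⟨h1, h2, h3⟩ | ⟨h1, h2, h3, h4⟩ | ⟨h1, h2, h3, h4⟩
  · exact Or.inl ⟨h2, h1, h3.symm⟩
  · exact Or.inr (Or.inr ⟨h1, h2, h3, h4.symm⟩)
  · exact Or.inr (Or.inl ⟨h1, h2, h3, h4.symm⟩)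

lemma caseData_adj (h : CaseData G a b p r p2 r2) : G.Adj p2 r2 := by
  rcases h with ⟨h1, h2, h3⟩ | ⟨h1, h2, h3, h4⟩ | ⟨h1, h2, h3, h4⟩
  · rw [h1, h2]; exact h3
  · rw [h2, h3]; exact h4
  · rw [h2, h3]; exact h4

lemma fwd_walk (hab : G.Adj a b) :
    ∀ {s t : V} (W : G.Walk s t),
      ∃ W' : (contractEdge G a b).Walk (cmap a b s) (cmap a b t),
        ∀ e' ∈ W'.edges, ∃ e ∈ W.edges, e' = Sym2.map (cmap a b) e := by
  intro s t W
  induction W with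
  | nil => exact ⟨Walk.nil, by simp⟩
  | @cons c c' d hadj W ih =>
    obtain ⟨W', hW'⟩ := ih
    by_cases hcc : cmap a b c = cmap a b c'
    · refine ⟨W'.copy hcc.symm rfl, ?_⟩
      rw [Walk.edges_copy]
      intro e' he'
      obtain ⟨e, he, hh⟩ := hW' e' he'
      exact ⟨e, List.mem_cons_of_mem _ he, hh⟩
    · have hadj' : (contractEdge G a b).Adj (cmap a b c) (cmap a b c') := by
        refine ⟨hcc, cmap_ne_b hab.ne c, cmap_ne_b hab.ne c', ?_⟩
        by_cases hcb : c = b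
        · have hc'b : c' ≠ b := fun hc => hadj.ne (hcb.trans hc.symm)
          rw [hcb, cmap_b, cmap_of_ne hc'b]
          exact Or.inr (Or.inl ⟨rfl, hcb ▸ hadj⟩)
        · by_cases hc'b : c' = b
          · rw [hc'b, cmap_b, cmap_of_ne hcb]
            exact Or.inr (Or.inr ⟨rfl, hc'b ▸ hadj⟩)
          · rw [cmap_of_ne hcb, cmap_of_ne hc'b]
            exact Or.inl hadj
      refine ⟨Walk.cons hadj' W', ?_⟩
      intro e' he'
      rw [Walk.edges_cons, List.mem_cons] at he'
      rcases he' with rfl | he'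
      · exact ⟨s(c, c'), List.mem_cons_self, (Sym2.map_pair_eq _ _ _).symm⟩
      · obtain ⟨e, he, hh⟩ := hW' e' he'
        exact ⟨e, List.mem_cons_of_mem _ he, hh⟩

lemma image_ne_aux (tri : ∀ c, G.Adj c a → G.Adj c b → False)
    (hprne : p ≠ r) (hcase : CaseData G a b p r p2 r2) {x y : V} (hxy : G.Adj x y)
    (hne : s(x, y) ≠ s(p2, r2)) (h1 : cmap a b x = p) (h2 : cmap a b y = r) : False := by
  by_cases hxb : x = b
  · rw [hxb, cmap_b] at h1
    have hyb : y ≠ b := fun hc => hxy.ne (hxb.trans hc.symm)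
    rw [cmap_of_ne hyb] at h2
    rcases hcase with ⟨hp2, hr2, hadj⟩ | ⟨hpa, hp2, hr2, hadj⟩ | ⟨hra, hr2, hp2, hadj⟩
    · refine tri y ?_ (hxb ▸ hxy).symm
      rw [← h1, ← h2] at hadj
      exact hadj.symm
    · exact hne (by rw [hxb, hp2, hr2, h2])
    · exact hprne (hra.trans h1).symm
  · rw [cmap_of_ne hxb] at h1
    by_cases hyb : y = b
    · rw [hyb, cmap_b] at h2
      rcases hcase with ⟨hp2, hr2, hadj⟩ | ⟨hpa, hp2, hr2, hadj⟩ | ⟨hra, hr2, hp2, hadj⟩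
      · refine tri x ?_ (hyb ▸ hxy)
        rw [← h1, ← h2] at hadj
        exact hadj
      · exact hprne (hpa.trans h2)
      · exact hne (by rw [h1, hyb, hp2, hr2])
    · rw [cmap_of_ne hyb] at h2
      rcases hcase with ⟨hp2, hr2, hadj⟩ | ⟨hpa, hp2, hr2, hadj⟩ | ⟨hra, hr2, hp2, hadj⟩
      · exact hne (by rw [h1, h2, hp2, hr2])
      · rw [h1, hpa] at hxy
        rw [h2] at hxy
        exact tri r hxy.symm hadj.symm
      · rw [h1] at hxy
        rw [h2, hra] at hxy
        exact tri p hxy hadj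

lemma image_ne (tri : ∀ c, G.Adj c a → G.Adj c b → False)
    (hprne : p ≠ r) (hcase : CaseData G a b p r p2 r2) {x y : V} (hxy : G.Adj x y)
    (hne : s(x, y) ≠ s(p2, r2)) : Sym2.map (cmap a b) s(x, y) ≠ s(p, r) := by
  rw [Sym2.map_pair_eq]
  intro hc
  rw [Sym2.eq_iff] at hc
  rcases hc with ⟨h1, h2⟩ | ⟨h1, h2⟩
  · exact image_ne_aux tri hprne hcase hxy hne h1 h2
  · exact image_ne_aux tri hprne hcase hxy.symm
      (fun hcc => hne (Sym2.eq_swap.trans hcc)) h2 h1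

lemma bwd_walk (hab : G.Adj a b) (hprne : p ≠ r) (hpb : p ≠ b) (hrb : r ≠ b)
    (hcase : CaseData G a b p r p2 r2) :
    ∀ {s t : V} (W' : (contractEdge G a b).Walk s t),
      (∀ e ∈ W'.edges, e ≠ s(p, r)) → ∃ W : G.Walk s t, ∀ e ∈ W.edges, e ≠ s(p2, r2) := by
  intro s t W'
  induction W' with
  | nil => exact fun _ => ⟨Walk.nil, by simp⟩
  | @cons c c' d hadj W' ih =>
    intro hav
    obtain ⟨W, hW⟩ := ih (fun e he => hav e (List.mem_cons_of_mem _ he))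
    obtain ⟨hne, hcb, hc'b, hor⟩ := hadj
    have havh : s(c, c') ≠ s(p, r) := hav _ (List.mem_cons_self)
    rcases hor with hAdj | ⟨hca, hbc'⟩ | ⟨hc'a, hcb'⟩
    · refine ⟨Walk.cons hAdj W, ?_⟩
      intro e he
      rw [Walk.edges_cons, List.mem_cons] at he
      rcases he with rfl | he
      · rcases hcase with ⟨hp2, hr2, -⟩ | ⟨-, hp2, hr2, -⟩ | ⟨-, hr2, hp2, -⟩
        · rw [hp2, hr2]; exact havh
        · rw [hp2, hr2]
          intro hc2
          rw [Sym2.eq_iff] at hc2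
          rcases hc2 with ⟨h3, -⟩ | ⟨-, h3⟩
          · exact hcb h3
          · exact hc'b h3
        · rw [hp2, hr2]
          intro hc2
          rw [Sym2.eq_iff] at hc2
          rcases hc2 with ⟨-, h3⟩ | ⟨h3, -⟩
          · exact hc'b h3
          · exact hcb h3
      · exact hW e he
    · -- c = a, G.Adj b c' ; replace by  c = a — b — c'
      refine ⟨Walk.cons (hca ▸ hab) (Walk.cons hbc' W), ?_⟩
      intro e he
      simp only [Walk.edges_cons, List.mem_cons] at he
      rcases he with rfl | rfl | he
      · -- e = s(c, b) with c = a
        rcases hcase with ⟨hp2, hr2, -⟩ | ⟨hpa, hp2, hr2, -⟩ | ⟨hra, hr2, hp2, -⟩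
        · rw [hp2, hr2]
          intro hc2
          rw [Sym2.eq_iff] at hc2
          rcases hc2 with ⟨-, h3⟩ | ⟨-, h3⟩
          · exact hrb h3.symm
          · exact hpb h3.symm
        · rw [hp2, hr2]
          intro hc2
          rw [Sym2.eq_iff] at hc2
          rcases hc2 with ⟨h3, -⟩ | ⟨h3, -⟩
          · exact hcb h3
          · exact hprne (hpa.trans (hca.symm.trans h3))
        · rw [hp2, hr2]
          intro hc2
          rw [Sym2.eq_iff] at hc2
          rcases hc2 with ⟨h3, -⟩ | ⟨h3, -⟩
          · exact hprne ((hca.symm.trans h3).symm.trans hra.symm)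
          · exact hcb h3
      · -- e = s(b, c')
        rcases hcase with ⟨hp2, hr2, -⟩ | ⟨hpa, hp2, hr2, -⟩ | ⟨hra, hr2, hp2, -⟩
        · rw [hp2, hr2]
          intro hc2
          rw [Sym2.eq_iff] at hc2
          rcases hc2 with ⟨h3, -⟩ | ⟨h3, -⟩
          · exact hpb h3.symm
          · exact hrb h3.symm
        · rw [hp2, hr2]
          intro hc2
          rw [Sym2.eq_iff] at hc2
          rcases hc2 with ⟨-, h3⟩ | ⟨h3, -⟩
          · exact havh (by rw [hca, hpa, h3])
          · exact hrb h3.symm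
        · rw [hp2, hr2]
          intro hc2
          rw [Sym2.eq_iff] at hc2
          rcases hc2 with ⟨h3, -⟩ | ⟨-, h3⟩
          · exact hpb h3.symm
          · exact havh (by rw [hca, h3, hra, Sym2.eq_swap])
      · exact hW e he
    · -- c' = a, G.Adj c b ; replace by c — b — a = c'
      refine ⟨Walk.cons hcb' (Walk.cons (hc'a ▸ hab.symm) W), ?_⟩
      intro e he
      simp only [Walk.edges_cons, List.mem_cons] at he
      rcases he with rfl | rfl | he
      · -- e = s(c, b)
        rcases hcase with ⟨hp2, hr2, -⟩ | ⟨hpa, hp2, hr2, -⟩ | ⟨hra, hr2, hp2, -⟩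
        · rw [hp2, hr2]
          intro hc2
          rw [Sym2.eq_iff] at hc2
          rcases hc2 with ⟨-, h3⟩ | ⟨-, h3⟩
          · exact hrb h3.symm
          · exact hpb h3.symm
        · rw [hp2, hr2]
          intro hc2
          rw [Sym2.eq_iff] at hc2
          rcases hc2 with ⟨h3, -⟩ | ⟨h3, -⟩
          · exact hcb h3
          · exact havh (by rw [h3, hc'a, hpa, Sym2.eq_swap])
        · rw [hp2, hr2]
          intro hc2
          rw [Sym2.eq_iff] at hc2
          rcases hc2 with ⟨h3, -⟩ | ⟨h3, -⟩
          · exact havh (by rw [h3, hc'a, hra])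
          · exact hcb h3
      · -- e = s(b, c') with c' = a
        rcases hcase with ⟨hp2, hr2, -⟩ | ⟨hpa, hp2, hr2, -⟩ | ⟨hra, hr2, hp2, -⟩
        · rw [hp2, hr2]
          intro hc2
          rw [Sym2.eq_iff] at hc2
          rcases hc2 with ⟨h3, -⟩ | ⟨h3, -⟩
          · exact hpb h3.symm
          · exact hrb h3.symm
        · rw [hp2, hr2]
          intro hc2
          rw [Sym2.eq_iff] at hc2
          rcases hc2 with ⟨-, h3⟩ | ⟨h3, -⟩
          · exact hprne (hpa.trans (hc'a.symm.trans h3))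
          · exact hrb h3.symm
        · rw [hp2, hr2]
          intro hc2
          rw [Sym2.eq_iff] at hc2
          rcases hc2 with ⟨h3, -⟩ | ⟨-, h3⟩
          · exact hpb h3.symm
          · exact hprne ((h3.symm.trans hc'a).trans hra.symm)
      · exact hW e he

lemma side_contract (hab : G.Adj a b) (tri : ∀ c, G.Adj c a → G.Adj c b → False)
    (hprne : p ≠ r) (hpb : p ≠ b) (hrb : r ≠ b) (hcase : CaseData G a b p r p2 r2)
    {s : V} (hs : s ≠ b) :
    s ∈ side (contractEdge G a b) p r ↔ s ∈ side G p2 r2 := by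
  have hcmp : cmap a b p2 = p := by
    rcases hcase with ⟨hp2, -, -⟩ | ⟨hpa, hp2, -, -⟩ | ⟨-, -, hp2, -⟩
    · rw [hp2, cmap_of_ne hpb]
    · rw [hp2, cmap_b, hpa]
    · rw [hp2, cmap_of_ne hpb]
  constructor
  · intro hmem
    rw [mem_side_iff] at hmem ⊢
    obtain ⟨W', hW'⟩ := hmem
    obtain ⟨W, hW⟩ := bwd_walk hab hprne hpb hrb hcase W' hW'
    rcases hcase with ⟨hp2, hr2, -⟩ | ⟨hpa, hp2, hr2, -⟩ | ⟨hra, hr2, hp2, -⟩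
    · exact ⟨W.copy rfl hp2.symm, by rw [Walk.edges_copy]; exact hW⟩
    · refine ⟨((W.copy rfl hpa).concat hab).copy rfl hp2.symm, ?_⟩
      rw [Walk.edges_copy, Walk.edges_concat, Walk.edges_copy]
      intro e he
      rw [List.concat_eq_append, List.mem_append] at he
      rcases he with he | he
      · exact hW e he
      · obtain rfl := List.mem_singleton.mp he
        rw [hp2, hr2]
        intro hc2
        rw [Sym2.eq_iff] at hc2
        rcases hc2 with ⟨h3, -⟩ | ⟨h3, -⟩
        · exact hab.ne h3
        · exact hprne (hpa.trans h3)
    · exact ⟨W.copy rfl hp2.symm, by rw [Walk.edges_copy]; exact hW⟩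
  · intro hmem
    rw [mem_side_iff] at hmem ⊢
    obtain ⟨W, hW⟩ := hmem
    obtain ⟨W', hW'⟩ := fwd_walk hab W
    refine ⟨W'.copy (cmap_of_ne hs) hcmp, ?_⟩
    rw [Walk.edges_copy]
    intro e' he'
    obtain ⟨e, he, rfl⟩ := hW' e' he'
    have hEG : e ∈ G.edgeSet := W.edges_subset_edgeSet he
    have hne2 := hW e he
    revert hEG hne2
    induction e using Sym2.ind with
    | _ x y =>
      intro hEG hne2
      exact image_ne tri hprne hcase ((SimpleGraph.mem_edgeSet (G := G)).mp hEG) hne2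

lemma sideLabels_contract [Finite V] (hG : G.IsAcyclic) (hab : G.Adj a b)
    (hla : ¬IsLeaf G a) (hlb : ¬IsLeaf G b) (hprne : p ≠ r) (hpb : p ≠ b) (hrb : r ≠ b)
    (hcase : CaseData G a b p r p2 r2) (ψ : V → L) :
    sideLabels (contractEdge G a b) ψ p r = sideLabels G ψ p2 r2 := by
  have tri : ∀ c, G.Adj c a → G.Adj c b → False := fun c => no_triangle hG hab
  ext m
  constructor
  · rintro ⟨f, hfleaf, hfside, hflab⟩
    have hfleaf' : IsLeaf G f := (leaf_contract hG hab hla hlb f).mp hfleaf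
    have hfb : f ≠ b := fun hc => hlb (hc ▸ hfleaf')
    exact ⟨f, hfleaf', (side_contract hab tri hprne hpb hrb hcase hfb).mp hfside, hflab⟩
  · rintro ⟨f, hfleaf, hfside, hflab⟩
    have hfb : f ≠ b := fun hc => hlb (hc ▸ hfleaf)
    exact ⟨f, (leaf_contract hG hab hla hlb f).mpr hfleaf,
      (side_contract hab tri hprne hpb hrb hcase hfb).mpr hfside, hflab⟩

lemma resolves_contract [Finite V] (hG : G.IsAcyclic) (hab : G.Adj a b)
    (hla : ¬IsLeaf G a) (hlb : ¬IsLeaf G b) (hpr : (contractEdge G a b).Adj p r)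
    (hcase : CaseData G a b p r p2 r2) (ψ : V → L) (q : Quartet L) :
    Resolves (contractEdge G a b) ψ p r q ↔ Resolves G ψ p2 r2 q := by
  have hprne : p ≠ r := hpr.1
  have hpb : p ≠ b := hpr.2.1
  have hrb : r ≠ b := hpr.2.2.1
  have hM1 : Mside (contractEdge G a b) ψ p r = Mside G ψ p2 r2 := by
    unfold Mside
    rw [sideLabels_contract hG hab hla hlb hprne hpb hrb hcase ψ,
        sideLabels_contract hG hab hla hlb (Ne.symm hprne) hrb hpb (caseData_swap hcase) ψ]
  have hM2 : Mside (contractEdge G a b) ψ r p = Mside G ψ r2 p2 := by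
    unfold Mside
    rw [sideLabels_contract hG hab hla hlb (Ne.symm hprne) hrb hpb (caseData_swap hcase) ψ,
        sideLabels_contract hG hab hla hlb hprne hpb hrb hcase ψ]
  unfold Resolves
  rw [hM1, hM2]
  constructor
  · rintro ⟨-, rest⟩; exact ⟨caseData_adj hcase, rest⟩
  · rintro ⟨-, rest⟩; exact ⟨hpr, rest⟩

lemma info_contract [Finite V] (hG : G.IsAcyclic) (hab : G.Adj a b)
    (hla : ¬IsLeaf G a) (hlb : ¬IsLeaf G b) (ψ : V → L)
    (hMba : Mside G ψ b a = ∅) :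
    infoContent (contractEdge G a b) ψ = infoContent G ψ := by
  ext q
  constructor
  · rintro ⟨p, r, hres⟩
    rcases hres.1.2.2.2 with hAdj | ⟨hpa, hbr⟩ | ⟨hra, hpb'⟩
    · exact ⟨p, r, (resolves_contract hG hab hla hlb hres.1
        (Or.inl ⟨rfl, rfl, hAdj⟩) ψ q).mp hres⟩
    · exact ⟨b, r, (resolves_contract hG hab hla hlb hres.1
        (Or.inr (Or.inl ⟨hpa, rfl, rfl, hbr⟩)) ψ q).mp hres⟩
    · exact ⟨p, b, (resolves_contract hG hab hla hlb hres.1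
        (Or.inr (Or.inr ⟨hra, rfl, rfl, hpb'⟩)) ψ q).mp hres⟩
  · rintro ⟨s, t, hres⟩
    have hst : G.Adj s t := hres.1
    by_cases hsb : s = b
    · by_cases hta : t = a
      · obtain ⟨-, α, β, γ, δ, -, -, hα, -, -, -, -⟩ := hres
        rw [hsb, hta, hMba] at hα
        exact absurd hα (Set.notMem_empty α)
      · have htb : t ≠ b := fun hc => hst.ne (hsb.trans hc.symm)
        have hadj' : (contractEdge G a b).Adj a t :=
          ⟨fun hc => hta hc.symm, hab.ne, htb, Or.inr (Or.inl ⟨rfl, hsb ▸ hst⟩)⟩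
        refine ⟨a, t, (resolves_contract hG hab hla hlb hadj'
          (Or.inr (Or.inl ⟨rfl, rfl, rfl, hsb ▸ hst⟩)) ψ q).mpr ?_⟩
        exact hsb ▸ hres
    · by_cases htb : t = b
      · by_cases hsa : s = a
        · obtain ⟨-, α, β, γ, δ, -, -, -, -, hγ, -, -⟩ := hres
          rw [hsa, htb, hMba] at hγ
          exact absurd hγ (Set.notMem_empty γ)
        · have hadj' : (contractEdge G a b).Adj s a :=
            ⟨hsa, hsb, hab.ne, Or.inr (Or.inr ⟨rfl, htb ▸ hst⟩)⟩
          refine ⟨s, a, (resolves_contract hG hab hla hlb hadj'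
            (Or.inr (Or.inr ⟨rfl, rfl, rfl, htb ▸ hst⟩)) ψ q).mpr ?_⟩
          exact htb ▸ hres
      · have hadj' : (contractEdge G a b).Adj s t := ⟨hst.ne, hsb, htb, Or.inl hst⟩
        exact ⟨s, t, (resolves_contract hG hab hla hlb hadj'
          (Or.inl ⟨rfl, rfl, hst⟩) ψ q).mpr hres⟩

end Contract

/-- If `(u,v)` and `(w,x)` are informative edges on a path `P_{u,x}`
with `Δ(u,v) ⊆ Δ(w,x)`, then every internal edge in a subtree branching out from
`P_{u,x}` is contractible; indeed every such edge `(a,b)` (with `a` the endpoint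
closer to the path) satisfies `M_b^{ab} = ∅` and resolves no quartet. -/
theorem stmt10 (T : MulTree V L) (u v w x : V) (h : PathConfig T.G u v w x)
    (h1 : (Δ T.G T.ψ u v).Nonempty) (h2 : (Δ T.G T.ψ w x).Nonempty)
    (hsub : Δ T.G T.ψ u v ⊆ Δ T.G T.ψ w x)
    (y z a b : V) (hbr : BranchesOut T.G u x y z)
    (hab : T.G.Adj a b) (ha : a ∈ side T.G z y) (hb : b ∈ side T.G z y)
    (hor : y ∈ side T.G a b) :
    Mside T.G T.ψ b a = ∅ ∧ Δ T.G T.ψ a b = ∅ ∧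
      (InternalEdge T.G a b → Contractible T.G T.ψ a b) := by
  classical
  obtain ⟨huv, hwx, ⟨hRux, hvP⟩, ⟨hRvx, hwP⟩⟩ := h
  obtain ⟨hyz, ⟨hRux', hyP⟩, hyu, hyx, hznot⟩ := hbr
  have hG := T.acyclic
  -- w lies on every u-x walk
  have hwux : ∀ p : T.G.Walk u x, w ∈ p.support := fun p => by
    have hv := hvP p
    exact Walk.support_dropUntil_subset _ hv (hwP (p.dropUntil v hv))
  obtain ⟨Q1, hQ1e, hQ1m⟩ := path_decomp hG huv hRux hvP
  have hwxu : ∀ p : T.G.Walk x u, w ∈ p.support := fun p => by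
    have := hwux p.reverse
    rwa [Walk.support_reverse, List.mem_reverse] at this
  have hyxu : ∀ p : T.G.Walk x u, y ∈ p.support := fun p => by
    have := hyP p.reverse
    rwa [Walk.support_reverse, List.mem_reverse] at this
  obtain ⟨Q2, hQ2e, hQ2m⟩ := path_decomp hG hwx.symm hRux.symm hwxu
  -- side memberships along the path
  have hyvu : y ∈ side T.G v u := side_of_on_walk hQ1e (hQ1m y hyP hyu)
  have hxvu : x ∈ side T.G v u := side_of_on_walk hQ1e Q1.end_mem_support
  have hywx : y ∈ side T.G w x := side_of_on_walk hQ2e (hQ2m y hyxu hyx)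
  have huwx : u ∈ side T.G w x := side_of_on_walk hQ2e Q2.end_mem_support
  -- a walk from u to x missing z
  have hWz : ∃ Wz : T.G.Walk u x, z ∉ Wz.support := by
    by_contra hcon
    push_neg at hcon
    exact hznot ⟨hRux, hcon⟩
  obtain ⟨Wz, hzW⟩ := hWz
  have hWze : ∀ e ∈ Wz.edges, e ≠ s(y, z) := fun e he hc => hzW (by
    rw [hc] at he
    exact Wz.snd_mem_support_of_mem_edges he)
  have hyWz : y ∈ Wz.support := hyP Wz
  have hmemyz : ∀ c ∈ Wz.support, c ∈ side T.G y z := fun c hc =>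
    side_of_both_mem hWze hc hyWz
  have hnu : u ∉ side T.G z y := fun hmem =>
    side_disjoint hG hyz (hmemyz u Wz.start_mem_support) hmem
  have hnv : v ∉ side T.G z y := fun hmem =>
    side_disjoint hG hyz (hmemyz v (hvP Wz)) hmem
  have hnw : w ∉ side T.G z y := fun hmem =>
    side_disjoint hG hyz (hmemyz w (hwux Wz)) hmem
  have hnx : x ∉ side T.G z y := fun hmem =>
    side_disjoint hG hyz (hmemyz x Wz.end_mem_support) hmem
  have hzu : z ≠ u := fun hc => hzW (hc ▸ Wz.start_mem_support)
  have hzv : z ≠ v := fun hc => hzW (hc ▸ hvP Wz)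
  have hzw : z ≠ w := fun hc => hzW (hc ▸ hwux Wz)
  have hzx : z ≠ x := fun hc => hzW (hc ▸ Wz.end_mem_support)
  -- z ∈ side v u and z ∈ side w x
  have hzvu : z ∈ side T.G v u := by
    obtain ⟨Wyv, hWyv⟩ := mem_side_iff.mp hyvu
    refine mem_side_iff.mpr ⟨Walk.cons hyz.symm Wyv, ?_⟩
    intro e he
    rw [Walk.edges_cons, List.mem_cons] at he
    rcases he with rfl | he
    · intro hc
      rw [Sym2.eq_iff] at hc
      rcases hc with ⟨hc1, -⟩ | ⟨hc1, -⟩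
      · exact hzv hc1
      · exact hzu hc1
    · exact hWyv e he
  have hzwx : z ∈ side T.G w x := by
    obtain ⟨Wyw, hWyw⟩ := mem_side_iff.mp hywx
    refine mem_side_iff.mpr ⟨Walk.cons hyz.symm Wyw, ?_⟩
    intro e he
    rw [Walk.edges_cons, List.mem_cons] at he
    rcases he with rfl | he
    · intro hc
      rw [Sym2.eq_iff] at hc
      rcases hc with ⟨hc1, -⟩ | ⟨hc1, -⟩
      · exact hzw hc1
      · exact hzx hc1
    · exact hWyw e he
  -- the subset chain
  have hsub_zy_vu : side T.G z y ⊆ side T.G v u := sub1 hzvu hnu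
  have hsub_zy_wx : side T.G z y ⊆ side T.G w x := sub1 hzwx hnx
  have hsub_uv_wx : side T.G u v ⊆ side T.G w x :=
    sub1 huwx (fun hmem => side_disjoint hG huv hmem hxvu)
  have hsub_ba_zy : side T.G b a ⊆ side T.G z y :=
    sub1 hb (fun hmem => side_disjoint hG hab hor hmem)
  -- Part 1 : Mside b a = ∅
  have hMba : Mside T.G T.ψ b a = ∅ := by
    rw [Set.eq_empty_iff_forall_notMem]
    rintro ℓ ⟨⟨e0, he0leaf, he0side, he0lab⟩, hnot⟩
    have hasup : a ∈ T.G.support := ⟨b, hab⟩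
    have hleafside : ∀ f, IsLeaf T.G f → T.ψ f = ℓ → f ∈ side T.G b a := by
      intro f hf hfl
      have hfr : T.G.Reachable f a := T.conn f (leaf_mem_support hf) a hasup
      rcases reach_side_or (q := b) hfr with hmem | hmem
      · exact absurd ⟨f, hf, hmem, hfl⟩ hnot
      · exact hmem
    have hℓvu : ℓ ∈ Mside T.G T.ψ v u := by
      refine ⟨⟨e0, he0leaf, hsub_zy_vu (hsub_ba_zy he0side), he0lab⟩, ?_⟩
      rintro ⟨f, hf, hfs, hfl⟩
      exact side_disjoint hG huv hfs (hsub_zy_vu (hsub_ba_zy (hleafside f hf hfl)))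
    have hℓwx : ℓ ∈ Mside T.G T.ψ w x := by
      refine ⟨⟨e0, he0leaf, hsub_zy_wx (hsub_ba_zy he0side), he0lab⟩, ?_⟩
      rintro ⟨f, hf, hfs, hfl⟩
      exact side_disjoint hG hwx (hsub_zy_wx (hsub_ba_zy (hleafside f hf hfl))) hfs
    obtain ⟨q0, hq0⟩ := h1
    obtain ⟨hadjuv, α, β, γ, δ, hαβ, hγδ, hα, hβ, hγ, hδ, rfl⟩ := hq0
    obtain ⟨γ₀, hγ₀, hγ₀ℓ⟩ : ∃ g, g ∈ Mside T.G T.ψ v u ∧ g ≠ ℓ := by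
      by_cases hc : γ = ℓ
      · exact ⟨δ, hδ, fun hh => hγδ (hc ▸ hh ▸ rfl)⟩
      · exact ⟨γ, hγ, hc⟩
    have hq' : s(s(α, β), s(γ₀, ℓ)) ∈ Δ T.G T.ψ u v :=
      ⟨hadjuv, α, β, γ₀, ℓ, hαβ, hγ₀ℓ, hα, hβ, hγ₀, hℓvu, rfl⟩
    obtain ⟨hadjwx, α', β', γ', δ', hαβ', hγδ', hα', hβ', hγ', hδ', heq⟩ := hsub hq'
    have hMxw_ℓ : ℓ ∉ Mside T.G T.ψ x w := fun hmem => hℓwx.2 hmem.1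
    have hMxw_α : α ∉ Mside T.G T.ψ x w := by
      intro hmem
      obtain ⟨⟨g, hgleaf, hgside, hglab⟩, -⟩ := hα
      exact hmem.2 ⟨g, hgleaf, hsub_uv_wx hgside, hglab⟩
    have hMxw_β : β ∉ Mside T.G T.ψ x w := by
      intro hmem
      obtain ⟨⟨g, hgleaf, hgside, hglab⟩, -⟩ := hβ
      exact hmem.2 ⟨g, hgleaf, hsub_uv_wx hgside, hglab⟩
    rw [Sym2.eq_iff] at heq
    rcases heq with ⟨h1', h2'⟩ | ⟨h1', h2'⟩
    · rw [Sym2.eq_iff] at h2'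
      rcases h2' with ⟨-, hh⟩ | ⟨-, hh⟩
      · exact hMxw_ℓ (hh ▸ hδ')
      · exact hMxw_ℓ (hh ▸ hγ')
    · rw [Sym2.eq_iff] at h1'
      rcases h1' with ⟨hh, -⟩ | ⟨hh, -⟩
      · exact hMxw_α (hh ▸ hγ')
      · exact hMxw_α (hh ▸ hδ')
  -- Part 2 : Δ a b = ∅
  have hΔab : Δ T.G T.ψ a b = ∅ := by
    rw [Set.eq_empty_iff_forall_notMem]
    rintro q ⟨-, α, β, γ, δ, -, -, -, -, hγ, -, -⟩
    rw [hMba] at hγ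
    exact hγ
  refine ⟨hMba, hΔab, ?_⟩
  intro hint
  haveI := T.fin
  exact ⟨hint, info_contract hG hab hint.2.1 hint.2.2 T.ψ hMba⟩
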